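/- For every bounded continuous g : ℝ → ℝ and every x ∈ ℝ one has |h⁻¹(x)| ≤ (1/ν) |x|^ν (x²+1)^((μ−ν)/2) e^(‖g‖_∞), and for x ≠ 0 one has |h⁻¹(x)| ≥ e^(−(μ−1)) |x|^ν (x²+1)^((μ−ν)/2) e^(⨍₀ˣ g) ≥ e^(−(μ−1)) |x|^ν (x²+1)^((μ−ν)/2) e^(−‖g‖_∞), where ⨍₀ˣ g = (1/x)∫₀ˣ g(y) dy denotes the average of g over the interval between 0 and x. -/

import Mathlib

open MeasureTheory Real Filter Set Bornology

/-- `h⁻¹(x) = ∫₀ˣ |y|^(ν−1)(y²+1)^((μ−ν)/2) e^(g(y)) dy`. -/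
noncomputable def hInv (μ ν : ℝ) (g : ℝ → ℝ) (x : ℝ) : ℝ :=
  ∫ y in (0:ℝ)..x, |y| ^ (ν - 1) * (y ^ 2 + 1) ^ ((μ - ν) / 2) * Real.exp (g y)

/-- `(h⁻¹)'(x) = |x|^(ν−1)(x²+1)^((μ−ν)/2) e^(g(x))`. -/
noncomputable def hInvDeriv (μ ν : ℝ) (g : ℝ → ℝ) (x : ℝ) : ℝ :=
  |x| ^ (ν - 1) * (x ^ 2 + 1) ^ ((μ - ν) / 2) * Real.exp (g x)

/-- The constant `κ = κ(g)` determined by `∫_ℝ κ/(x h⁻¹(x) (h⁻¹)'(x)) dx = (μ−ν)π`. -/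
noncomputable def kappa (μ ν : ℝ) (g : ℝ → ℝ) : ℝ :=
  (μ - ν) * Real.pi / ∫ x : ℝ, 1 / (x * hInv μ ν g x * hInvDeriv μ ν g x)

/-- `F'(x) = κ/(x h⁻¹(x) (h⁻¹)'(x))`. -/
noncomputable def Fder (μ ν : ℝ) (g : ℝ → ℝ) (x : ℝ) : ℝ :=
  kappa μ ν g / (x * hInv μ ν g x * hInvDeriv μ ν g x)

/-- `F = F_g`, the antiderivative of `Fder` with `F(+∞) = 0`. -/
noncomputable def Fg (μ ν : ℝ) (g : ℝ → ℝ) (x : ℝ) : ℝ :=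
  -∫ y in Set.Ioi x, Fder μ ν g y

/-- `θ(x)`: the continuous branch of `arg (x − i)`, i.e. `arctan(−1/x)` for `x > 0`,
`arctan(−1/x) − π` for `x < 0`, and `−π/2` at `x = 0`. -/
noncomputable def theta (x : ℝ) : ℝ :=
  if x = 0 then -(Real.pi / 2)
  else if x < 0 then Real.arctan (-1 / x) - Real.pi
  else Real.arctan (-1 / x)

/-- `HasHilbertAt f x v`: the principal value `(1/π) lim_{ε→0⁺} ∫_{|x−y|>ε} f(y)/(x−y) dy`
exists and equals `v`. -/
def HasHilbertAt (f : ℝ → ℝ) (x v : ℝ) : Prop :=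
  Filter.Tendsto
    (fun ε : ℝ => (1 / Real.pi) * ∫ y in {y : ℝ | ε < |x - y|}, f y / (x - y))
    (nhdsWithin 0 (Set.Ioi 0)) (nhds v)

/-- `G(x) = g(x) + (1/2)(μ−ν) ln(x²+1)`. -/
noncomputable def Gfun (μ ν : ℝ) (g : ℝ → ℝ) (x : ℝ) : ℝ :=
  g x + (1 / 2) * (μ - ν) * Real.log (x ^ 2 + 1)

/-- `g` is a solution of system (3.12): `g` is bounded and continuous, the principal
value `T[g](x) = H(F_g − (μ−ν)θ)(x)` exists for every `x`, and `g = T[g]`. -/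
def IsSolution (μ ν : ℝ) (g : ℝ → ℝ) : Prop :=
  Continuous g ∧ (∃ M : ℝ, ∀ x, |g x| ≤ M) ∧
    ∀ x : ℝ, HasHilbertAt (fun y => Fg μ ν g y - (μ - ν) * theta y) x (g x)

section auxlemmas
open intervalIntegral


lemma aux_ae_ne_zero : ∀ᵐ y : ℝ, y ≠ (0:ℝ) := by
  rw [MeasureTheory.ae_iff]
  simp only [not_not, Set.setOf_eq_eq_singleton]
  exact measure_singleton 0

lemma aux_log_II {x : ℝ} (hx : 0 < x) : IntervalIntegrable Real.log volume 0 x := by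
  rw [intervalIntegrable_iff_integrableOn_Ioc_of_le hx.le]
  have hb : IntegrableOn (fun y : ℝ => 2 * y ^ (-(1:ℝ)/2) + |Real.log x|) (Ioc 0 x) := by
    apply Integrable.add
    · exact ((intervalIntegrable_iff_integrableOn_Ioc_of_le hx.le).mp
        (intervalIntegrable_rpow' (by norm_num))).const_mul 2
    · exact integrableOn_const measure_Ioc_lt_top.ne
  refine Integrable.mono' hb Real.measurable_log.aestronglyMeasurable ?_
  filter_upwards [ae_restrict_mem measurableSet_Ioc] with y hy
  have hy0 : 0 < y := hy.1
  rcases le_or_gt y 1 with h1 | h1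
  · have hlogy : Real.log y ≤ 0 := Real.log_nonpos hy0.le h1
    have e1 : Real.log (Real.sqrt y)⁻¹ ≤ (Real.sqrt y)⁻¹ - 1 :=
      Real.log_le_sub_one_of_pos (by positivity)
    rw [Real.log_inv, Real.log_sqrt hy0.le] at e1
    have e2 : y ^ (-(1:ℝ)/2) = (Real.sqrt y)⁻¹ := by
      rw [Real.sqrt_eq_rpow, ← Real.rpow_neg hy0.le]
      norm_num
    have e3 : (0:ℝ) ≤ |Real.log x| := abs_nonneg _
    calc ‖Real.log y‖ = -(Real.log y) := by
          rw [Real.norm_eq_abs, abs_of_nonpos hlogy]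
      _ ≤ 2 * ((Real.sqrt y)⁻¹ - 1) := by linarith
      _ ≤ 2 * y ^ (-(1:ℝ)/2) + |Real.log x| := by rw [e2]; linarith [Real.sqrt_pos.mpr hy0]
  · have h2 : Real.log y ≤ Real.log x := Real.log_le_log hy0 hy.2
    have h3 : (0:ℝ) ≤ 2 * y ^ (-(1:ℝ)/2) := by positivity
    calc ‖Real.log y‖ = Real.log y := by
          rw [Real.norm_eq_abs, abs_of_nonneg (Real.log_nonneg h1.le)]
      _ ≤ |Real.log x| := le_trans h2 (le_abs_self _)
      _ ≤ 2 * y ^ (-(1:ℝ)/2) + |Real.log x| := by linarith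

lemma aux_integral_log {x : ℝ} (hx : 0 < x) :
    ∫ y in (0:ℝ)..x, Real.log y = x * Real.log x - x := by
  have hderiv : ∀ y ∈ Ioo (0:ℝ) x, HasDerivAt (fun y => y * Real.log y - y) (Real.log y) y := by
    intro y hy
    have := (Real.hasDerivAt_mul_log hy.1.ne').sub (hasDerivAt_id y)
    rw [add_sub_cancel_right] at this
    exact this
  have hcont : Continuous (fun y : ℝ => y * Real.log y - y) :=
    Real.continuous_mul_log.sub continuous_id
  have ha : Tendsto (fun y : ℝ => y * Real.log y - y) (nhdsWithin 0 (Set.Ioi 0)) (nhds 0) := by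
    have := (hcont.tendsto 0).mono_left (nhdsWithin_le_nhds (s := Set.Ioi (0:ℝ)))
    simpa using this
  have hb : Tendsto (fun y : ℝ => y * Real.log y - y) (nhdsWithin x (Set.Iio x))
      (nhds (x * Real.log x - x)) :=
    (hcont.tendsto x).mono_left (nhdsWithin_le_nhds (s := Set.Iio x))
  have h := intervalIntegral.integral_eq_sub_of_hasDerivAt_of_tendsto hx hderiv
    (aux_log_II hx) ha hb
  simpa using h


lemma hInv_core (μ ν : ℝ) (hμ1 : 1 / 2 < μ) (hν1 : 0 < ν) (hν2 : ν < 1 / 2)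
    (g : ℝ → ℝ) (hg : Continuous g) (M : ℝ) (hM : ∀ x : ℝ, |g x| ≤ M)
    {x : ℝ} (hx : 0 < x) :
    0 ≤ hInv μ ν g x ∧
    hInv μ ν g x ≤ 1 / ν * x ^ ν * (x ^ 2 + 1) ^ ((μ - ν) / 2) * Real.exp M ∧
    Real.exp (-(μ - 1)) * x ^ ν * (x ^ 2 + 1) ^ ((μ - ν) / 2) *
      Real.exp ((1 / x) * ∫ y in (0:ℝ)..x, g y) ≤ hInv μ ν g x := by
  have hp : 0 ≤ (μ - ν) / 2 := by linarith
  have hν1' : (-1 : ℝ) < ν - 1 := by linarith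
  -- continuity of the smooth part
  have hcont : Continuous (fun y : ℝ => (y ^ 2 + 1) ^ ((μ - ν) / 2) * Real.exp (g y)) := by
    apply Continuous.mul
    · exact Continuous.rpow_const (by continuity) (fun y => Or.inl (by positivity))
    · exact Real.continuous_exp.comp hg
  -- integrability of the main integrand (with |y| replaced by y)
  have hII1 : IntervalIntegrable
      (fun y => y ^ (ν - 1) * ((y ^ 2 + 1) ^ ((μ - ν) / 2) * Real.exp (g y))) volume 0 x :=
    (intervalIntegrable_rpow' hν1').mul_continuousOn hcont.continuousOn
  have hIeq : hInv μ ν g x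
      = ∫ y in (0:ℝ)..x, y ^ (ν - 1) * ((y ^ 2 + 1) ^ ((μ - ν) / 2) * Real.exp (g y)) := by
    apply intervalIntegral.integral_congr
    intro y hy
    rw [uIcc_of_le hx.le] at hy
    simp only [abs_of_nonneg hy.1]; ring
  -- nonnegativity
  have hnn : 0 ≤ hInv μ ν g x := by
    apply intervalIntegral.integral_nonneg hx.le
    intro y _
    positivity
  refine ⟨hnn, ?_, ?_⟩
  · -- upper bound
    have hub : (∫ y in (0:ℝ)..x, y ^ (ν - 1) * ((y ^ 2 + 1) ^ ((μ - ν) / 2) * Real.exp (g y)))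
        ≤ ∫ y in (0:ℝ)..x, y ^ (ν - 1) * ((x ^ 2 + 1) ^ ((μ - ν) / 2) * Real.exp M) := by
      apply intervalIntegral.integral_mono_on hx.le hII1
        ((intervalIntegrable_rpow' hν1').mul_const _)
      intro y hy
      apply mul_le_mul_of_nonneg_left _ (Real.rpow_nonneg hy.1 _)
      apply mul_le_mul
      · exact Real.rpow_le_rpow (by positivity) (by nlinarith [hy.1, hy.2]) hp
      · exact Real.exp_le_exp.mpr ((abs_le.mp (hM y)).2)
      · exact (Real.exp_pos _).le
      · positivity
    have hval : (∫ y in (0:ℝ)..x, y ^ (ν - 1) * ((x ^ 2 + 1) ^ ((μ - ν) / 2) * Real.exp M))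
        = 1 / ν * x ^ ν * (x ^ 2 + 1) ^ ((μ - ν) / 2) * Real.exp M := by
      have h1 : ν - 1 + 1 = ν := by ring
      rw [intervalIntegral.integral_mul_const,
        integral_rpow (Or.inl hν1'), h1, Real.zero_rpow hν1.ne']
      field_simp
      ring
    rw [hIeq]
    rw [hval] at hub
    exact hub
  · -- lower bound
    set c : ℝ := -(μ - 1) + (1 / x) * ∫ y in (0:ℝ)..x, g y with hc
    set K : ℝ := x ^ (ν - 1) * (x ^ 2 + 1) ^ ((μ - ν) / 2) with hK
    have hKnn : 0 ≤ K := by rw [hK]; positivity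
    have hIIin : IntervalIntegrable
        (fun y => 1 + ((μ - 1) * (Real.log y - Real.log x) + g y - c)) volume 0 x := by
      apply IntervalIntegrable.add intervalIntegrable_const
      exact IntervalIntegrable.sub
        ((((aux_log_II hx).sub intervalIntegrable_const).const_mul (μ - 1)).add
          (hg.intervalIntegrable 0 x)) intervalIntegrable_const
    -- pointwise bound on Ioc 0 x
    have hpt : ∀ y ∈ Ioc (0:ℝ) x,
        K * Real.exp c * (1 + ((μ - 1) * (Real.log y - Real.log x) + g y - c))
          ≤ y ^ (ν - 1) * ((y ^ 2 + 1) ^ ((μ - ν) / 2) * Real.exp (g y)) := by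
      intro y hy
      have hy0 : 0 < y := hy.1
      have hyx0 : 0 < y / x := div_pos hy0 hx
      set t : ℝ := (μ - 1) * (Real.log y - Real.log x) + g y with ht
      have h1 : Real.exp c * (1 + (t - c)) ≤ Real.exp t := by
        have h := Real.add_one_le_exp (t - c)
        calc Real.exp c * (1 + (t - c)) = ((t - c) + 1) * Real.exp c := by ring
          _ ≤ Real.exp (t - c) * Real.exp c :=
              mul_le_mul_of_nonneg_right h (Real.exp_pos c).le
          _ = Real.exp t := by rw [← Real.exp_add]; ring_nf
      have h2 : Real.exp t = (y / x) ^ (μ - 1) * Real.exp (g y) := by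
        rw [ht, Real.exp_add, Real.rpow_def_of_pos hyx0, Real.log_div hy0.ne' hx.ne',
          mul_comm (Real.log y - Real.log x) (μ - 1)]
      have hsplit : (y / x) ^ (μ - 1) = (y / x) ^ (ν - 1) * (y / x) ^ (μ - ν) := by
        rw [← Real.rpow_add hyx0]; ring_nf
      have hy1 : (y / x) ^ (ν - 1) = y ^ (ν - 1) / x ^ (ν - 1) :=
        Real.div_rpow hy0.le hx.le _
      have hy2 : (y / x) ^ (μ - ν) * (x ^ 2 + 1) ^ ((μ - ν) / 2) ≤ (y ^ 2 + 1) ^ ((μ - ν) / 2) := by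
        have e : (y / x) ^ (μ - ν) = ((y / x) ^ (2:ℕ)) ^ ((μ - ν) / 2) := by
          rw [← Real.rpow_natCast (y / x) 2, ← Real.rpow_mul hyx0.le]
          congr 1
          push_cast
          ring
        rw [e, ← Real.mul_rpow (by positivity) (by positivity)]
        apply Real.rpow_le_rpow (by positivity) _ hp
        have hx2 : (0:ℝ) < x ^ 2 := by positivity
        rw [div_pow, div_mul_eq_mul_div, div_le_iff₀ hx2]
        nlinarith [hy.2, hy0]
      have hxne : x ^ (ν - 1) ≠ 0 := (Real.rpow_pos_of_pos hx _).ne'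
      have hKle : K * (y / x) ^ (μ - 1)
          ≤ y ^ (ν - 1) * (y ^ 2 + 1) ^ ((μ - ν) / 2) := by
        rw [hsplit, hy1, hK]
        calc x ^ (ν - 1) * (x ^ 2 + 1) ^ ((μ - ν) / 2) * (y ^ (ν - 1) / x ^ (ν - 1) * (y / x) ^ (μ - ν))
            = y ^ (ν - 1) * ((y / x) ^ (μ - ν) * (x ^ 2 + 1) ^ ((μ - ν) / 2)) := by
              field_simp
          _ ≤ y ^ (ν - 1) * (y ^ 2 + 1) ^ ((μ - ν) / 2) :=
              mul_le_mul_of_nonneg_left hy2 (Real.rpow_nonneg hy0.le _)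
      calc K * Real.exp c * (1 + ((μ - 1) * (Real.log y - Real.log x) + g y - c))
          = K * (Real.exp c * (1 + (t - c))) := by rw [ht]; ring
        _ ≤ K * Real.exp t := mul_le_mul_of_nonneg_left h1 hKnn
        _ = K * (y / x) ^ (μ - 1) * Real.exp (g y) := by rw [h2]; ring
        _ ≤ y ^ (ν - 1) * (y ^ 2 + 1) ^ ((μ - ν) / 2) * Real.exp (g y) :=
            mul_le_mul_of_nonneg_right hKle (Real.exp_pos _).le
        _ = y ^ (ν - 1) * ((y ^ 2 + 1) ^ ((μ - ν) / 2) * Real.exp (g y)) := by ring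
    -- monotonicity of the integral
    have hmono : (∫ y in (0:ℝ)..x,
          K * Real.exp c * (1 + ((μ - 1) * (Real.log y - Real.log x) + g y - c)))
        ≤ ∫ y in (0:ℝ)..x, y ^ (ν - 1) * ((y ^ 2 + 1) ^ ((μ - ν) / 2) * Real.exp (g y)) := by
      apply intervalIntegral.integral_mono_ae_restrict hx.le (hIIin.const_mul _) hII1
      filter_upwards [ae_restrict_mem measurableSet_Icc,
        MeasureTheory.ae_restrict_of_ae aux_ae_ne_zero] with y hy hy0
      exact hpt y ⟨lt_of_le_of_ne hy.1 (Ne.symm hy0), hy.2⟩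
    -- value of the lower integrand's integral
    have hval : (∫ y in (0:ℝ)..x,
          K * Real.exp c * (1 + ((μ - 1) * (Real.log y - Real.log x) + g y - c)))
        = K * Real.exp c * x := by
      rw [intervalIntegral.integral_const_mul]
      have hin : (∫ y in (0:ℝ)..x, (1 + ((μ - 1) * (Real.log y - Real.log x) + g y - c))) = x := by
        rw [intervalIntegral.integral_add intervalIntegrable_const
            (IntervalIntegrable.sub
              ((((aux_log_II hx).sub intervalIntegrable_const).const_mul (μ - 1)).add
                (hg.intervalIntegrable 0 x)) intervalIntegrable_const),
          intervalIntegral.integral_sub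
            ((((aux_log_II hx).sub intervalIntegrable_const).const_mul (μ - 1)).add
              (hg.intervalIntegrable 0 x)) intervalIntegrable_const,
          intervalIntegral.integral_add
            (((aux_log_II hx).sub intervalIntegrable_const).const_mul (μ - 1))
            (hg.intervalIntegrable 0 x),
          intervalIntegral.integral_const_mul,
          intervalIntegral.integral_sub (aux_log_II hx) intervalIntegrable_const,
          aux_integral_log hx, intervalIntegral.integral_const,
          intervalIntegral.integral_const, intervalIntegral.integral_const]
        simp only [smul_eq_mul, sub_zero, hc]
        field_simp
        ring
      rw [hin]
    -- identify the target with K * exp c * x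
    have htar : Real.exp (-(μ - 1)) * x ^ ν * (x ^ 2 + 1) ^ ((μ - ν) / 2) *
          Real.exp ((1 / x) * ∫ y in (0:ℝ)..x, g y) = K * Real.exp c * x := by
      have hxν : x ^ ν = x ^ (ν - 1) * x := by
        rw [← Real.rpow_add_one hx.ne' (ν - 1)]; norm_num
      rw [hc, hK, Real.exp_add, hxν]
      ring
    rw [hIeq, htar]
    rw [hval] at hmono
    exact hmono


lemma hInv_flip (μ ν : ℝ) (g : ℝ → ℝ) (x : ℝ) :
    hInv μ ν (fun y => g (-y)) (-x) = - hInv μ ν g x := by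
  unfold hInv
  have h1 : (∫ y in (0:ℝ)..(-x), |y| ^ (ν - 1) * (y ^ 2 + 1) ^ ((μ - ν) / 2) * Real.exp (g (-y)))
      = ∫ y in (0:ℝ)..(-x),
          (fun z => |z| ^ (ν - 1) * (z ^ 2 + 1) ^ ((μ - ν) / 2) * Real.exp (g z)) (-y) := by
    apply intervalIntegral.integral_congr
    intro y _
    simp [abs_neg, neg_sq]
  rw [h1, intervalIntegral.integral_comp_neg
    (fun z => |z| ^ (ν - 1) * (z ^ 2 + 1) ^ ((μ - ν) / 2) * Real.exp (g z))]
  simp only [neg_neg, neg_zero]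
  exact intervalIntegral.integral_symm 0 x

lemma avg_flip (g : ℝ → ℝ) {x : ℝ} (hx : x < 0) :
    (1 / (-x)) * ∫ y in (0:ℝ)..(-x), g (-y) = (1 / x) * ∫ y in (0:ℝ)..x, g y := by
  have hx0 : x ≠ 0 := hx.ne
  have h1 : (∫ y in (0:ℝ)..(-x), g (-y)) = - ∫ y in (0:ℝ)..x, g y := by
    rw [intervalIntegral.integral_comp_neg g]
    simp only [neg_neg, neg_zero]
    exact intervalIntegral.integral_symm 0 x
  rw [h1]
  field_simp

end auxlemmas

/-- Lemma 5.2, part 1: pointwise upper and lower bounds for `h⁻¹`, where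
`⨍₀ˣ g = (1/x)∫₀ˣ g` is the average of `g` over the interval from `0` to `x`. -/
theorem statement4 (μ ν : ℝ) (hμ1 : 1 / 2 < μ) (hμ2 : μ ≤ 2) (hν1 : 0 < ν) (hν2 : ν < 1 / 2)
    (g : ℝ → ℝ) (hg : Continuous g) (M : ℝ) (hM : ∀ x : ℝ, |g x| ≤ M) :
    (∀ x : ℝ,
      |hInv μ ν g x| ≤ 1 / ν * |x| ^ ν * (x ^ 2 + 1) ^ ((μ - ν) / 2) * Real.exp M) ∧
    (∀ x : ℝ, x ≠ 0 →
      Real.exp (-(μ - 1)) * |x| ^ ν * (x ^ 2 + 1) ^ ((μ - ν) / 2) *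
          Real.exp ((1 / x) * ∫ y in (0:ℝ)..x, g y) ≤ |hInv μ ν g x| ∧
      Real.exp (-(μ - 1)) * |x| ^ ν * (x ^ 2 + 1) ^ ((μ - ν) / 2) * Real.exp (-M) ≤
        Real.exp (-(μ - 1)) * |x| ^ ν * (x ^ 2 + 1) ^ ((μ - ν) / 2) *
          Real.exp ((1 / x) * ∫ y in (0:ℝ)..x, g y)) := by
  have hM0 : 0 ≤ M := le_trans (abs_nonneg _) (hM 0)
  have third : ∀ x : ℝ, x ≠ 0 → -M ≤ (1 / x) * ∫ y in (0:ℝ)..x, g y := by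
    intro x hx0
    have hI : ‖∫ y in (0:ℝ)..x, g y‖ ≤ M * |x - 0| :=
      intervalIntegral.norm_integral_le_of_norm_le_const (fun y _ => by
        simpa [Real.norm_eq_abs] using hM y)
    rw [Real.norm_eq_abs, sub_zero] at hI
    have hxa : |x| ≠ 0 := abs_ne_zero.mpr hx0
    have habs : |(1 / x) * ∫ y in (0:ℝ)..x, g y| ≤ M := by
      rw [abs_mul, abs_div, abs_one]
      calc 1 / |x| * |∫ y in (0:ℝ)..x, g y| ≤ 1 / |x| * (M * |x|) :=
            mul_le_mul_of_nonneg_left hI (by positivity)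
        _ = M := by field_simp
    exact (abs_le.mp habs).1
  have lower : ∀ x : ℝ, x ≠ 0 →
      Real.exp (-(μ - 1)) * |x| ^ ν * (x ^ 2 + 1) ^ ((μ - ν) / 2) *
        Real.exp ((1 / x) * ∫ y in (0:ℝ)..x, g y) ≤ |hInv μ ν g x| := by
    intro x hx0
    rcases lt_or_gt_of_ne hx0 with hlt | hgt
    · have ht : (0:ℝ) < -x := by linarith
      have hg' : Continuous (fun y : ℝ => g (-y)) := hg.comp continuous_neg
      have hM' : ∀ y : ℝ, |(fun y : ℝ => g (-y)) y| ≤ M := fun y => hM (-y)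
      obtain ⟨h0, _, h2⟩ := hInv_core μ ν hμ1 hν1 hν2 _ hg' M hM' ht
      have habs : |hInv μ ν g x| = hInv μ ν (fun y => g (-y)) (-x) := by
        rw [show hInv μ ν g x = -(hInv μ ν (fun y => g (-y)) (-x)) from by
          rw [hInv_flip]; ring, abs_neg, abs_of_nonneg h0]
      rw [habs, abs_of_neg hlt, ← avg_flip g hlt, show x ^ 2 = (-x) ^ 2 from (neg_sq x).symm]
      exact h2
    · obtain ⟨h0, _, h2⟩ := hInv_core μ ν hμ1 hν1 hν2 g hg M hM hgt
      rw [abs_of_nonneg h0, abs_of_pos hgt]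
      exact h2
  refine ⟨?_, fun x hx0 => ⟨lower x hx0, ?_⟩⟩
  · intro x
    rcases lt_trichotomy x 0 with hlt | heq | hgt
    · have ht : (0:ℝ) < -x := by linarith
      have hg' : Continuous (fun y : ℝ => g (-y)) := hg.comp continuous_neg
      have hM' : ∀ y : ℝ, |(fun y : ℝ => g (-y)) y| ≤ M := fun y => hM (-y)
      obtain ⟨h0, h1, _⟩ := hInv_core μ ν hμ1 hν1 hν2 _ hg' M hM' ht
      have habs : |hInv μ ν g x| = hInv μ ν (fun y => g (-y)) (-x) := by
        rw [show hInv μ ν g x = -(hInv μ ν (fun y => g (-y)) (-x)) from by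
          rw [hInv_flip]; ring, abs_neg, abs_of_nonneg h0]
      rw [habs, abs_of_neg hlt, show x ^ 2 = (-x) ^ 2 from (neg_sq x).symm]
      exact h1
    · subst heq
      simp [hInv, Real.zero_rpow hν1.ne']
    · obtain ⟨h0, h1, _⟩ := hInv_core μ ν hμ1 hν1 hν2 g hg M hM hgt
      rw [abs_of_nonneg h0, abs_of_pos hgt]
      exact h1
  · exact mul_le_mul_of_nonneg_left (Real.exp_le_exp.mpr (third x hx0)) (by positivity)
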